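/- Let φ(x) = exp(−x²/2)/√(2π) be the standard normal density, Φ its cumulative distribution function, and for c > 0 define G(c) = (1 − 2cφ(c) + 2(c² − 1)Φ(−c)) / (1 − 2Φ(−c))². Then G is strictly decreasing on (0, ∞): for 0 < c₁ < c₂, G(c₂) < G(c₁). -/

import Mathlib

open MeasureTheory
open Set Filter Real


/-- The standard normal density φ(x) = exp(−x²/2)/√(2π). -/
noncomputable def stdPdf (x : ℝ) : ℝ := Real.exp (-x ^ 2 / 2) / Real.sqrt (2 * Real.pi)

/-- The standard normal cumulative distribution function Φ(x) = ∫_{−∞}^x φ. -/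
noncomputable def stdCdf (x : ℝ) : ℝ := ∫ t in Set.Iic x, stdPdf t

/-- G(c): the asymptotic variance of the Huber M-estimate of location with
tuning constant c, under standard normal errors. -/
noncomputable def huberVar (c : ℝ) : ℝ :=
  (1 - 2 * c * stdPdf c + 2 * (c ^ 2 - 1) * stdCdf (-c)) / (1 - 2 * stdCdf (-c)) ^ 2



lemma stdPdf_pos (x : ℝ) : 0 < stdPdf x :=
  div_pos (Real.exp_pos _) (Real.sqrt_pos.2 (by positivity))

lemma stdPdf_even (x : ℝ) : stdPdf (-x) = stdPdf x := by simp [stdPdf]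

lemma continuous_stdPdf : Continuous stdPdf := by
  unfold stdPdf; fun_prop

lemma stdPdf_eq (x : ℝ) : stdPdf x = Real.exp (-(1/2) * x ^ 2) * (Real.sqrt (2 * Real.pi))⁻¹ := by
  rw [stdPdf, div_eq_mul_inv]; ring_nf

lemma integrable_stdPdf : Integrable stdPdf := by
  have h := (integrable_exp_neg_mul_sq (b := 1/2) (by norm_num)).mul_const
    (Real.sqrt (2 * Real.pi))⁻¹
  exact h.congr (by filter_upwards with x; rw [stdPdf_eq])

lemma integrable_mul_stdPdf : Integrable (fun x => x * stdPdf x) := by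
  have h := (integrable_mul_exp_neg_mul_sq (b := 1/2) (by norm_num)).mul_const
    (Real.sqrt (2 * Real.pi))⁻¹
  exact h.congr (by filter_upwards with x; rw [stdPdf_eq]; ring)

lemma integral_stdPdf : ∫ x, stdPdf x = 1 := by
  have h : ∫ x, Real.exp (-(1/2) * x ^ 2) = Real.sqrt (Real.pi / (1/2)) :=
    integral_gaussian (1/2)
  have h2 : (∫ x, stdPdf x) = (∫ x, Real.exp (-(1/2) * x ^ 2)) * (Real.sqrt (2 * Real.pi))⁻¹ := by
    rw [← integral_mul_const]; congr 1; ext x; rw [stdPdf_eq]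
  rw [h2, h]
  rw [show Real.pi / (1/2) = 2 * Real.pi by ring]
  rw [mul_inv_cancel₀ (by positivity)]

lemma hasDerivAt_stdPdf (x : ℝ) : HasDerivAt stdPdf (-x * stdPdf x) x := by
  have h1 : HasDerivAt (fun y : ℝ => -y ^ 2 / 2) (-x) x := by
    have := ((hasDerivAt_pow 2 x).neg.div_const 2)
    simpa using this.congr_deriv (by ring)
  have h2 := h1.exp
  have h3 := h2.div_const (Real.sqrt (2 * Real.pi))
  exact h3.congr_deriv (by rw [stdPdf]; ring)

lemma hasDerivAt_stdCdf (x : ℝ) : HasDerivAt stdCdf (stdPdf x) x := by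
  have key : ∀ u : ℝ, stdCdf u = stdCdf 0 + ∫ t in (0:ℝ)..u, stdPdf t := by
    intro u
    rw [← intervalIntegral.integral_Iic_sub_Iic integrable_stdPdf.integrableOn integrable_stdPdf.integrableOn]
    simp [stdCdf]
  have h : HasDerivAt (fun u => stdCdf 0 + ∫ t in (0:ℝ)..u, stdPdf t) (stdPdf x) x := by
    exact (intervalIntegral.integral_hasDerivAt_right
      (integrable_stdPdf.intervalIntegrable)
      (continuous_stdPdf.stronglyMeasurableAtFilter _ _)
      continuous_stdPdf.continuousAt).const_add _
  rw [show stdCdf = fun u => stdCdf 0 + ∫ t in (0:ℝ)..u, stdPdf t from funext key]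
  exact h

lemma stdCdf_neg (x : ℝ) : stdCdf (-x) = 1 - stdCdf x := by
  have h1 : (∫ t in Iic x, stdPdf (-t)) = ∫ t in Ioi (-x), stdPdf t :=
    integral_comp_neg_Iic x stdPdf
  have h2 : (∫ t in Iic x, stdPdf t) = ∫ t in Ioi (-x), stdPdf t := by
    rw [← h1]; congr 1; ext t; rw [stdPdf_even]
  have h3 : (∫ t in Iic (-x), stdPdf t) + (∫ t in Ioi (-x), stdPdf t) = ∫ t, stdPdf t :=
    intervalIntegral.integral_Iic_add_Ioi integrable_stdPdf.integrableOn integrable_stdPdf.integrableOn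
  rw [integral_stdPdf] at h3
  simp only [stdCdf]
  linarith [h2, h3]

/-- D(c) = 1 − 2Φ(−c) is the interval integral of φ over [−c,c]. -/
lemma D_eq (c : ℝ) : 1 - 2 * stdCdf (-c) = ∫ t in (-c)..c, stdPdf t := by
  rw [← intervalIntegral.integral_Iic_sub_Iic integrable_stdPdf.integrableOn
    integrable_stdPdf.integrableOn]
  have := stdCdf_neg c
  show 1 - 2 * stdCdf (-c) = stdCdf c - stdCdf (-c)
  linarith

/-- The truncated second moment is positive: D(c) > 2cφ(c) for c > 0. -/
lemma A_pos {c : ℝ} (hc : 0 < c) : 2 * c * stdPdf c < 1 - 2 * stdCdf (-c) := by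
  have key : 0 < ∫ t in (-c)..c, (stdPdf t - stdPdf c) := by
    apply intervalIntegral.intervalIntegral_pos_of_pos_on
    · exact ((continuous_stdPdf.sub continuous_const).intervalIntegrable _ _)
    · intro t ht
      have h1 : t ^ 2 < c ^ 2 := by nlinarith [ht.1, ht.2]
      have h2 : Real.exp (-c ^ 2 / 2) < Real.exp (-t ^ 2 / 2) := by
        apply Real.exp_lt_exp.2; linarith
      have hs : 0 < Real.sqrt (2 * Real.pi) := Real.sqrt_pos.2 (by positivity)
      have : stdPdf c < stdPdf t := by
        simp only [stdPdf]; exact div_lt_div_of_pos_right h2 hs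
      linarith
    · linarith
  have hsplit : (∫ t in (-c)..c, (stdPdf t - stdPdf c))
      = (∫ t in (-c)..c, stdPdf t) - (c - -c) * stdPdf c := by
    rw [intervalIntegral.integral_sub (continuous_stdPdf.intervalIntegrable _ _)
      (intervalIntegrable_const), intervalIntegral.integral_const, smul_eq_mul]
  rw [hsplit, ← D_eq] at key
  linarith

lemma tendsto_stdPdf_atBot : Tendsto stdPdf atBot (nhds 0) := by
  have h1 : Tendsto (fun x : ℝ => -x ^ 2 / 2) atBot atBot := by
    apply Tendsto.atBot_div_const (by norm_num : (0:ℝ) < 2)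
    apply (tendsto_neg_atTop_atBot (G := ℝ)).comp
    have h0 : Tendsto (fun x : ℝ => (-x) ^ 2) atBot atTop :=
      (tendsto_pow_atTop (by norm_num)).comp tendsto_neg_atBot_atTop
    exact h0.congr fun x => by ring
  have h2 := Real.tendsto_exp_atBot.comp h1
  have h3 := h2.div_const (Real.sqrt (2 * Real.pi))
  have : (fun x : ℝ => Real.exp (-x ^ 2 / 2) / Real.sqrt (2 * Real.pi)) = stdPdf := rfl
  rw [zero_div] at h3
  exact this ▸ h3

lemma integral_neg_mul_stdPdf (a : ℝ) : ∫ t in Iic a, (-t * stdPdf t) = stdPdf a := by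
  have := MeasureTheory.integral_Iic_of_hasDerivAt_of_tendsto'
    (f := stdPdf) (f' := fun t => -t * stdPdf t) (a := a)
    (fun x _ => hasDerivAt_stdPdf x) (integrable_mul_stdPdf.neg.congr
      (by filter_upwards with x; simp only [Pi.neg_apply]; ring)).integrableOn tendsto_stdPdf_atBot
  simpa using this

lemma mills {c : ℝ} (hc : 0 < c) : c * stdCdf (-c) < stdPdf c := by
  set g : ℝ → ℝ := fun t => (-t - c) * stdPdf t with hg
  have hgint : Integrable g := by
    have : Integrable (fun t => -t * stdPdf t) :=
      integrable_mul_stdPdf.neg.congr (by filter_upwards with x; simp only [Pi.neg_apply]; ring)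
    exact (this.sub (integrable_stdPdf.const_mul c)).congr
      (by filter_upwards with x; simp [hg]; ring)
  have hgnn : ∀ t ∈ Iic (-c), 0 ≤ g t := by
    intro t ht
    have : 0 ≤ -t - c := by simp at ht; linarith
    exact mul_nonneg this (stdPdf_pos t).le
  have key : (0:ℝ) < ∫ t in Iic (-c), g t := by
    have h1 : (∫ t in (-c-2)..(-c-1), g t) ≤ ∫ t in Iic (-c), g t := by
      rw [intervalIntegral.integral_of_le (by linarith)]
      apply setIntegral_mono_set hgint.integrableOn
      · exact (ae_restrict_iff' measurableSet_Iic).2 (Filter.Eventually.of_forall hgnn)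
      · exact HasSubset.Subset.eventuallyLE fun t ht => le_trans ht.2 (by norm_num)
    have h2 : (0:ℝ) < ∫ t in (-c-2)..(-c-1), g t := by
      apply intervalIntegral.intervalIntegral_pos_of_pos_on
        hgint.intervalIntegrable
      · intro t ht
        have : 0 < -t - c := by linarith [ht.2]
        exact mul_pos this (stdPdf_pos t)
      · linarith
    linarith
  have hsplit : (∫ t in Iic (-c), g t)
      = (∫ t in Iic (-c), (-t * stdPdf t)) - c * ∫ t in Iic (-c), stdPdf t := by
    rw [← MeasureTheory.integral_const_mul, ← integral_sub
      (integrable_mul_stdPdf.neg.congr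
        (by filter_upwards with x; simp only [Pi.neg_apply]; ring)).integrableOn
      (integrable_stdPdf.integrableOn.const_mul c)]
    congr 1; ext t; simp [hg]; ring
  rw [hsplit, integral_neg_mul_stdPdf, stdPdf_even] at key
  show c * (∫ t in Iic (-c), stdPdf t) < stdPdf c
  linarith

lemma D_pos {c : ℝ} (hc : 0 < c) : 0 < 1 - 2 * stdCdf (-c) := by
  have := A_pos hc
  nlinarith [stdPdf_pos c]

lemma hasDerivAt_huberVar {c : ℝ} (hc : 0 < c) :
    HasDerivAt huberVar
      ((4 * c * stdCdf (-c) * (1 - 2 * stdCdf (-c)) ^ 2 -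
        (1 - 2 * c * stdPdf c + 2 * (c ^ 2 - 1) * stdCdf (-c)) *
          (2 * (1 - 2 * stdCdf (-c)) ^ 1 * (2 * stdPdf c)))
        / ((1 - 2 * stdCdf (-c)) ^ 2) ^ 2) c := by
  have hD := D_pos hc
  have hP := hasDerivAt_stdPdf c
  have hQ : HasDerivAt (fun x : ℝ => stdCdf (-x)) (-stdPdf c) c := by
    have h := (hasDerivAt_stdCdf (-c)).comp c (hasDerivAt_neg c)
    have : stdPdf (-c) * -1 = -stdPdf c := by rw [stdPdf_even]; ring
    exact this ▸ h
  have hmul : HasDerivAt (fun x : ℝ => 2 * x * stdPdf x)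
      (2 * stdPdf c + 2 * c * (-c * stdPdf c)) c := by
    have := ((hasDerivAt_id c).const_mul 2).mul hP
    simp only [id_eq] at this
    exact this.congr_deriv (by ring)
  have hsq : HasDerivAt (fun x : ℝ => 2 * (x ^ 2 - 1)) (2 * (2 * c)) c := by
    have := ((hasDerivAt_pow 2 c).sub_const 1).const_mul 2
    exact this.congr_deriv (by push_cast; ring)
  have hterm2 : HasDerivAt (fun x : ℝ => 2 * (x ^ 2 - 1) * stdCdf (-x))
      (2 * (2 * c) * stdCdf (-c) + 2 * (c ^ 2 - 1) * -stdPdf c) c := hsq.mul hQ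
  have hN : HasDerivAt
      (fun x : ℝ => 1 - 2 * x * stdPdf x + 2 * (x ^ 2 - 1) * stdCdf (-x))
      (4 * c * stdCdf (-c)) c := by
    have := (hmul.const_sub 1).add hterm2
    exact this.congr_deriv (by ring)
  have hDin : HasDerivAt (fun x : ℝ => 1 - 2 * stdCdf (-x)) (2 * stdPdf c) c := by
    have := (hQ.const_mul 2).const_sub 1
    exact this.congr_deriv (by ring)
  have hDen : HasDerivAt (fun x : ℝ => (1 - 2 * stdCdf (-x)) ^ 2)
      (2 * (1 - 2 * stdCdf (-c)) ^ 1 * (2 * stdPdf c)) c := by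
    have := hDin.pow 2
    exact this.congr_deriv (by push_cast; ring)
  have := hN.div hDen (by positivity)
  exact this

lemma deriv_huberVar_neg {c : ℝ} (hc : 0 < c) : deriv huberVar c < 0 := by
  rw [(hasDerivAt_huberVar hc).deriv]
  apply div_neg_of_neg_of_pos
  · have hnum : 4 * c * stdCdf (-c) * (1 - 2 * stdCdf (-c)) ^ 2 -
        (1 - 2 * c * stdPdf c + 2 * (c ^ 2 - 1) * stdCdf (-c)) *
          (2 * (1 - 2 * stdCdf (-c)) ^ 1 * (2 * stdPdf c))
        = -4 * ((1 - 2 * stdCdf (-c)) *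
            ((stdPdf c - c * stdCdf (-c)) * ((1 - 2 * stdCdf (-c)) - 2 * c * stdPdf c))) := by
      ring
    rw [hnum]
    have h1 : 0 < stdPdf c - c * stdCdf (-c) := sub_pos.2 (mills hc)
    have h2 : 0 < (1 - 2 * stdCdf (-c)) - 2 * c * stdPdf c := sub_pos.2 (A_pos hc)
    nlinarith [mul_pos (D_pos hc) (mul_pos h1 h2)]
  · have := D_pos hc
    positivity

/-- G is strictly decreasing on (0, ∞). -/
theorem stmt_13 (c₁ c₂ : ℝ) (h₁ : 0 < c₁) (h₁₂ : c₁ < c₂) :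
    huberVar c₂ < huberVar c₁ := by
  have key : StrictAntiOn huberVar (Icc c₁ c₂) := by
    apply strictAntiOn_of_deriv_neg (convex_Icc c₁ c₂)
    · intro x hx
      exact (hasDerivAt_huberVar (lt_of_lt_of_le h₁ hx.1)).continuousAt.continuousWithinAt
    · intro x hx
      rw [interior_Icc] at hx
      exact deriv_huberVar_neg (h₁.trans hx.1)
  exact key (Set.left_mem_Icc.2 h₁₂.le) (Set.right_mem_Icc.2 h₁₂.le) h₁₂
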